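/- If a state property system satisfies property (A), then L(Σ), the set of λ-closed subsets of Σ, is a complete atomistic lattice, with meets given by intersections and joins given by S ∨ T = λ(S ∪ T); the atoms are exactly the singletons {p}, p ∈ Σ. -/
import Mathlib


universe u v

/-- A state property system: states, a complete lattice of properties, and
the actuality map `xi` assigning to each state the set of actual properties. -/
structure SPS (σ : Type u) (L : Type v) [CompleteLattice L] where
  xi : σ → Set L
  top_mem : ∀ p, ⊤ ∈ xi p
  bot_not_mem : ∀ p, ⊥ ∉ xi p
  sInf_mem : ∀ (p : σ) (A : Set L), (∀ a ∈ A, a ∈ xi p) ↔ sInf A ∈ xi p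
  le_iff : ∀ a b : L, a ≤ b ↔ ∀ r, a ∈ xi r → b ∈ xi r

variable {σ : Type u} {L : Type v} [CompleteLattice L]

/-- λ{p,q} : the set of superpositions of the pair p, q. -/
def SPS.lamPair (S : SPS σ L) (p q : σ) : Set σ := {s | S.xi p ∩ S.xi q ⊆ S.xi s}

/-- A set is λ-closed if it contains λ{p,q} for each pair of its points. -/
def SPS.lamClosed (S : SPS σ L) (T : Set σ) : Prop :=
  ∀ p ∈ T, ∀ q ∈ T, S.lamPair p q ⊆ T

/-- λ(P) : the intersection of all λ-closed sets containing P. -/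
def SPS.lam (S : SPS σ L) (P : Set σ) : Set σ :=
  ⋂₀ {G | S.lamClosed G ∧ P ⊆ G}

/-- The set of superpositions of a set of states. -/
def SPS.bar (S : SPS σ L) (T : Set σ) : Set σ :=
  {p | (⋂ s ∈ T, S.xi s) ⊆ S.xi p}

/-- Property (A): at least two states and `xi` order-reflecting (injective). -/
def SPS.propA (S : SPS σ L) : Prop :=
  (∃ p q : σ, p ≠ q) ∧ ∀ p q : σ, S.xi p ⊆ S.xi q → p = q

/-- p is a minimal superposition of A. -/
def SPS.minSup (S : SPS σ L) (A : Set σ) (p : σ) : Prop :=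
  p ∈ S.bar A ∧ ∀ Q : Set σ, Q ⊂ A → p ∉ S.bar Q

/-- The minimal superposition principle for a given set A. -/
def SPS.MSPon (S : SPS σ L) (A : Set σ) : Prop :=
  ∀ p : σ, S.minSup A p →
    ∀ S₁ S₂ : Set σ, S₁ ⊂ A → S₂ ⊂ A → S₁ ∩ S₂ = ∅ → S₁ ∪ S₂ = A →
      (S.bar (S₁ ∪ {p}) ∩ S.bar S₂).Nonempty

/-- n-MSP : MSP for all sets of cardinality at most n. -/
def SPS.nMSP (S : SPS σ L) (n : ℕ) : Prop :=
  ∀ A : Set σ, A.Finite → A.ncard ≤ n → S.MSPon A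

/-- f-MSP : MSP for all finite sets. -/
def SPS.fMSP (S : SPS σ L) : Prop := ∀ A : Set σ, A.Finite → S.MSPon A

theorem stmt3 (S : SPS σ L) (hA : S.propA) :
    -- meets in L(Σ) are intersections
    (∀ 𝒜 : Set (Set σ), (∀ T ∈ 𝒜, S.lamClosed T) → S.lamClosed (⋂₀ 𝒜)) ∧
    -- joins in L(Σ) are given by S ∨ T = λ(S ∪ T)
    (∀ T U : Set σ, S.lamClosed T → S.lamClosed U →
      S.lamClosed (S.lam (T ∪ U)) ∧ T ⊆ S.lam (T ∪ U) ∧ U ⊆ S.lam (T ∪ U) ∧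
      ∀ W : Set σ, S.lamClosed W → T ⊆ W → U ⊆ W → S.lam (T ∪ U) ⊆ W) ∧
    -- the atoms are exactly the singletons
    (∀ p : σ, S.lamClosed ({p} : Set σ)) ∧
    (∀ T : Set σ, S.lamClosed T → T.Nonempty →
      (∀ U : Set σ, S.lamClosed U → U.Nonempty → U ⊆ T → U = T) → ∃ p : σ, T = {p}) ∧
    -- atomisticity: every λ-closed set is the join of the singletons it contains
    (∀ T : Set σ, S.lamClosed T → T = S.lam (⋃ p ∈ T, ({p} : Set σ))) := by

  have hsInter : ∀ 𝒜 : Set (Set σ), (∀ T ∈ 𝒜, S.lamClosed T) → S.lamClosed (⋂₀ 𝒜) := by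
    intro 𝒜 h p hp q hq s hs
    intro G hG
    exact h G hG p (hp G hG) q (hq G hG) hs
  have hsingle : ∀ p : σ, S.lamClosed ({p} : Set σ) := by
    intro p a ha b hb s hs
    simp only [Set.mem_singleton_iff] at ha hb ⊢
    exact (hA.2 p s (fun x hx => hs ⟨ha.symm ▸ hx, hb.symm ▸ hx⟩)).symm
  have hlam : ∀ P : Set σ, S.lamClosed (S.lam P) ∧ P ⊆ S.lam P ∧
      ∀ W, S.lamClosed W → P ⊆ W → S.lam P ⊆ W := by
    intro P
    refine ⟨?_, ?_, ?_⟩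
    · intro p hp q hq s hs G hG
      exact hG.1 p (hp G hG) q (hq G hG) hs
    · intro x hx G hG; exact hG.2 hx
    · intro W hW hPW x hx
      exact hx W ⟨hW, hPW⟩
  refine ⟨hsInter, ?_, hsingle, ?_, ?_⟩
  · intro T U hT hU
    obtain ⟨h1, h2, h3⟩ := hlam (T ∪ U)
    exact ⟨h1, fun x hx => h2 (Or.inl hx), fun x hx => h2 (Or.inr hx),
      fun W hW hTW hUW => h3 W hW (Set.union_subset hTW hUW)⟩
  · intro T hT ⟨p, hp⟩ hmin
    refine ⟨p, (hmin {p} (hsingle p) ⟨p, rfl⟩ ?_).symm⟩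
    intro x hx; simp only [Set.mem_singleton_iff] at hx; subst hx; exact hp
  · intro T hT
    have : (⋃ p ∈ T, ({p} : Set σ)) = T := by ext x; simp
    rw [this]
    obtain ⟨h1, h2, h3⟩ := hlam T
    exact (Set.Subset.antisymm h2 (h3 T hT le_rfl))
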